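/- (Measure-theoretic form of Theorem 4.3: small-ball estimates plus moments imply inverse moments of the Malliavin matrix.) Let μ be a probability measure on the space of real d × d matrices. Assume: (i) for every p ≥ 1, ∫ ‖V‖^p dμ(V) < ∞, where ‖·‖ is the operator norm; (ii) for every p ≥ 1 there is a constant C_p such that for every ε ∈ (0,1] and every unit vector ξ ∈ ℝ^d, μ{V : ‖Vξ‖ ≤ ε} ≤ C_p ε^p. Then μ-almost every V is invertible, and for every p ≥ 1 the integral ∫ ‖V^{-1}‖^p dμ(V) (taken over the invertible matrices) is finite. -/

import Mathlib

open MeasureTheory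
open scoped ENNReal NNReal

section AuxiliarySmallBall

open Metric Set ENNReal

/-- smallest singular value -/
noncomputable def smsv (d : ℕ) (V : EuclideanSpace ℝ (Fin d) →L[ℝ] EuclideanSpace ℝ (Fin d)) : ℝ :=
  sInf ((fun ξ => ‖V ξ‖) '' sphere (0 : EuclideanSpace ℝ (Fin d)) 1)


variable {d : ℕ}

lemma euclid_nontrivial (hd : 0 < d) : Nontrivial (EuclideanSpace ℝ (Fin d)) :=
  Module.nontrivial_of_finrank_pos (R := ℝ) (by simpa [finrank_euclideanSpace_fin] using hd)

lemma sphere_nonempty' (hd : 0 < d) : (sphere (0 : EuclideanSpace ℝ (Fin d)) 1).Nonempty := by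
  haveI := euclid_nontrivial hd
  exact NormedSpace.sphere_nonempty.2 zero_le_one

lemma smsv_le (V : EuclideanSpace ℝ (Fin d) →L[ℝ] EuclideanSpace ℝ (Fin d))
    {ξ : EuclideanSpace ℝ (Fin d)} (hξ : ‖ξ‖ = 1) : smsv d V ≤ ‖V ξ‖ :=
  csInf_le ⟨0, by rintro x ⟨y, -, rfl⟩; positivity⟩
    ⟨ξ, by simpa [mem_sphere_iff_norm] using hξ, rfl⟩

lemma smsv_nonneg (hd : 0 < d) (V : EuclideanSpace ℝ (Fin d) →L[ℝ] EuclideanSpace ℝ (Fin d)) :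
    0 ≤ smsv d V := by
  apply le_csInf (((sphere_nonempty' hd)).image _)
  rintro x ⟨y, -, rfl⟩; positivity

lemma smsv_mul_le (V : EuclideanSpace ℝ (Fin d) →L[ℝ] EuclideanSpace ℝ (Fin d))
    (x : EuclideanSpace ℝ (Fin d)) : smsv d V * ‖x‖ ≤ ‖V x‖ := by
  rcases eq_or_ne x 0 with rfl | hx
  · simp
  · have hn : ‖x‖ ≠ 0 := norm_ne_zero_iff.2 hx
    have hξ : ‖(‖x‖⁻¹ • x)‖ = 1 := by
      rw [norm_smul, norm_inv, norm_norm, inv_mul_cancel₀ hn]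
    have := smsv_le V hξ
    rw [_root_.map_smul, norm_smul, norm_inv, norm_norm] at this
    have hxpos : (0:ℝ) < ‖x‖ := (norm_pos_iff).2 hx
    calc smsv d V * ‖x‖ ≤ (‖x‖⁻¹ * ‖V x‖) * ‖x‖ := by nlinarith
    _ = ‖V x‖ := by field_simp

lemma smsv_exists_lt (hd : 0 < d) (V : EuclideanSpace ℝ (Fin d) →L[ℝ] EuclideanSpace ℝ (Fin d))
    {b : ℝ} (h : smsv d V < b) : ∃ ξ : EuclideanSpace ℝ (Fin d), ‖ξ‖ = 1 ∧ ‖V ξ‖ < b := by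
  obtain ⟨x, ⟨ξ, hξ, rfl⟩, hlt⟩ := exists_lt_of_csInf_lt ((sphere_nonempty' hd).image _) h
  exact ⟨ξ, by simpa [mem_sphere_iff_norm] using hξ, hlt⟩

lemma smsv_le_add (hd : 0 < d) (V W : EuclideanSpace ℝ (Fin d) →L[ℝ] EuclideanSpace ℝ (Fin d)) :
    smsv d V ≤ smsv d W + ‖V - W‖ := by
  apply _root_.le_of_forall_pos_le_add
  intro ε hε
  obtain ⟨ξ, hξ1, hξ2⟩ := smsv_exists_lt hd W (lt_add_of_pos_right _ hε)
  have h1 := smsv_le V hξ1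
  have h2 : ‖V ξ‖ ≤ ‖W ξ‖ + ‖V - W‖ := by
    calc ‖V ξ‖ ≤ ‖W ξ‖ + ‖(V - W) ξ‖ := by
          simpa using norm_add_le (W ξ) ((V - W) ξ)
    _ ≤ ‖W ξ‖ + ‖V - W‖ := by
          have := (V - W).le_opNorm ξ
          rw [hξ1, mul_one] at this; linarith
  linarith

lemma smsv_lipschitz (hd : 0 < d) : LipschitzWith 1 (smsv d) := by
  apply LipschitzWith.of_dist_le_mul
  intro V W
  rw [NNReal.coe_one, one_mul, Real.dist_eq, abs_sub_le_iff]
  have h1 := smsv_le_add hd V W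
  have h2 := smsv_le_add hd W V
  have h3 : dist V W = ‖V - W‖ := dist_eq_norm _ _
  have h4 : dist V W = ‖W - V‖ := dist_eq_norm' _ _
  constructor <;> linarith

lemma isUnit_of_smsv_pos {V : EuclideanSpace ℝ (Fin d) →L[ℝ] EuclideanSpace ℝ (Fin d)}
    (h : 0 < smsv d V) : IsUnit V := by
  rw [ContinuousLinearMap.isUnit_iff_bijective]
  have hinj : Function.Injective V := by
    intro x y hxy
    have h1 := smsv_mul_le V (x - y)
    rw [map_sub, hxy, sub_self, norm_zero] at h1
    have h2 : 0 ≤ ‖x - y‖ := norm_nonneg _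
    have h3 : ‖x - y‖ = 0 := by nlinarith
    exact sub_eq_zero.1 (norm_eq_zero.1 h3)
  refine ⟨hinj, ?_⟩
  exact (LinearMap.injective_iff_surjective (f := (V : EuclideanSpace ℝ (Fin d) →ₗ[ℝ] EuclideanSpace ℝ (Fin d)))).1 hinj

lemma norm_inverse_le_smsv {V : EuclideanSpace ℝ (Fin d) →L[ℝ] EuclideanSpace ℝ (Fin d)}
    (h : 0 < smsv d V) : ‖Ring.inverse V‖ ≤ (smsv d V)⁻¹ := by
  obtain ⟨u, rfl⟩ := isUnit_of_smsv_pos h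
  rw [Ring.inverse_unit]
  apply ContinuousLinearMap.opNorm_le_bound _ (by positivity)
  intro y
  have key : (↑u : EuclideanSpace ℝ (Fin d) →L[ℝ] EuclideanSpace ℝ (Fin d))
      ((↑u⁻¹ : EuclideanSpace ℝ (Fin d) →L[ℝ] EuclideanSpace ℝ (Fin d)) y) = y := by
    have h0 : ((u * u⁻¹ : (EuclideanSpace ℝ (Fin d) →L[ℝ] EuclideanSpace ℝ (Fin d))ˣ) :
        EuclideanSpace ℝ (Fin d) →L[ℝ] EuclideanSpace ℝ (Fin d)) y = y := by
      rw [mul_inv_cancel]; simp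
    rw [Units.val_mul, ContinuousLinearMap.mul_apply] at h0
    exact h0
  have h1 := smsv_mul_le (↑u) ((↑u⁻¹ : EuclideanSpace ℝ (Fin d) →L[ℝ] EuclideanSpace ℝ (Fin d)) y)
  rw [key] at h1
  rw [inv_mul_eq_div, le_div_iff₀ h]
  linarith

lemma card_le_of_separated (hd : 0 < d) {r : ℝ} (hr : r ∈ Ioc (0:ℝ) 1)
    (T : Finset (EuclideanSpace ℝ (Fin d))) (hT : ↑T ⊆ sphere (0 : EuclideanSpace ℝ (Fin d)) 1)
    (hsep : ∀ s ∈ T, ∀ t ∈ T, s ≠ t → r < dist s t) :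
    (T.card : ℝ) ≤ (4 / r) ^ d := by
  haveI := euclid_nontrivial hd
  set v1 := volume (ball (0 : EuclideanSpace ℝ (Fin d)) 1) with hv1
  have hv1pos : 0 < v1 := measure_ball_pos _ _ one_pos
  have hv1top : v1 < ⊤ := measure_ball_lt_top
  have hdisj : (↑T : Set (EuclideanSpace ℝ (Fin d))).PairwiseDisjoint
      (fun t => ball t (r/2)) := by
    intro s hs t ht hst
    exact ball_disjoint_ball (by linarith [hsep s hs t ht hst])
  have hsum : ∑ t ∈ T, volume (ball t (r/2)) = volume (⋃ t ∈ T, ball t (r/2)) :=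
    (measure_biUnion_finset hdisj (fun t _ => measurableSet_ball)).symm
  have hsub : (⋃ t ∈ T, ball t (r/2)) ⊆ ball (0 : EuclideanSpace ℝ (Fin d)) 2 := by
    intro y hy
    simp only [mem_iUnion] at hy
    obtain ⟨t, ht, hyt⟩ := hy
    have h1 : dist t 0 = 1 := by simpa [mem_sphere_iff_norm] using hT ht
    have := dist_triangle y t 0
    simp only [mem_ball] at hyt ⊢
    have hr2 : r / 2 ≤ 1 := by linarith [hr.2]
    linarith
  have hballs : ∀ t : EuclideanSpace ℝ (Fin d),
      volume (ball t (r/2)) = ENNReal.ofReal ((r/2) ^ d) * v1 := by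
    intro t
    rw [hv1, Measure.addHaar_ball _ _ (by linarith [hr.1] : (0:ℝ) ≤ r/2),
      finrank_euclideanSpace_fin]
  have hb2 : volume (ball (0 : EuclideanSpace ℝ (Fin d)) 2) = ENNReal.ofReal ((2:ℝ) ^ d) * v1 := by
    rw [hv1, Measure.addHaar_ball _ _ (by norm_num : (0:ℝ) ≤ 2), finrank_euclideanSpace_fin]
  have key : (T.card : ℝ≥0∞) * (ENNReal.ofReal ((r/2) ^ d) * v1) ≤ ENNReal.ofReal ((2:ℝ) ^ d) * v1 := by
    calc (T.card : ℝ≥0∞) * (ENNReal.ofReal ((r/2) ^ d) * v1)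
        = ∑ t ∈ T, volume (ball t (r/2)) := by
          rw [Finset.sum_congr rfl (fun t _ => hballs t), Finset.sum_const, nsmul_eq_mul]
    _ = volume (⋃ t ∈ T, ball t (r/2)) := hsum
    _ ≤ volume (ball (0 : EuclideanSpace ℝ (Fin d)) 2) := measure_mono hsub
    _ = _ := hb2
  have hrd : (0:ℝ) < (r/2) ^ d := pow_pos (by linarith [hr.1]) d
  have key2 : (T.card : ℝ) * ((r/2) ^ d * v1.toReal) ≤ (2:ℝ) ^ d * v1.toReal := by
    have hfin : ENNReal.ofReal ((2:ℝ) ^ d) * v1 ≠ ⊤ := by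
      exact ENNReal.mul_ne_top ofReal_ne_top hv1top.ne
    have := ENNReal.toReal_mono hfin key
    simpa [ENNReal.toReal_mul, ENNReal.toReal_ofReal hrd.le,
      ENNReal.toReal_ofReal (by positivity : (0:ℝ) ≤ (2:ℝ)^d)] using this
  have hvr : (0:ℝ) < v1.toReal := ENNReal.toReal_pos hv1pos.ne' hv1top.ne
  have h3 : (T.card : ℝ) * (r/2) ^ d ≤ (2:ℝ) ^ d := by nlinarith
  have h4 : (4 / r) ^ d = (2:ℝ) ^ d / (r/2) ^ d := by
    rw [← div_pow]
    congr 1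
    field_simp
    ring
  rw [h4, le_div_iff₀ hrd]
  linarith

lemma exists_net (hd : 0 < d) {r : ℝ} (hr : r ∈ Ioc (0:ℝ) 1) :
    ∃ T : Finset (EuclideanSpace ℝ (Fin d)),
      ↑T ⊆ sphere (0 : EuclideanSpace ℝ (Fin d)) 1 ∧ (T.card : ℝ) ≤ (4 / r) ^ d ∧
      ∀ ξ ∈ sphere (0 : EuclideanSpace ℝ (Fin d)) 1, ∃ t ∈ T, dist ξ t ≤ r := by
  classical
  set P : Finset (EuclideanSpace ℝ (Fin d)) → Prop := fun T =>
    ↑T ⊆ sphere (0 : EuclideanSpace ℝ (Fin d)) 1 ∧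
      ∀ s ∈ T, ∀ t ∈ T, s ≠ t → r < dist s t with hP
  set S : Set ℕ := {n | ∃ T, P T ∧ T.card = n} with hS
  have hbdd : BddAbove S := by
    refine ⟨⌈(4/r)^d⌉₊, ?_⟩
    rintro n ⟨T, ⟨hT1, hT2⟩, rfl⟩
    have := card_le_of_separated hd hr T hT1 hT2
    exact_mod_cast this.trans (Nat.le_ceil _)
  obtain ⟨ξ₀, hξ₀⟩ := sphere_nonempty' hd
  have hne : S.Nonempty := ⟨1, {ξ₀}, ⟨by simpa using hξ₀, by simp⟩, by simp⟩
  have hmem := Nat.sSup_mem hne hbdd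
  obtain ⟨T, ⟨hT1, hT2⟩, hcard⟩ := hmem
  refine ⟨T, hT1, card_le_of_separated hd hr T hT1 hT2, ?_⟩
  intro ξ hξ
  by_contra hcon
  push_neg at hcon
  have hξT : ξ ∉ T := by
    intro hm
    have := hcon ξ hm
    rw [dist_self] at this
    linarith [hr.1]
  have hPnew : P (insert ξ T) := by
    constructor
    · intro x hx
      simp only [Finset.coe_insert, Set.mem_insert_iff] at hx
      rcases hx with rfl | hx
      · exact hξ
      · exact hT1 hx
    · intro s hs t ht hst
      simp only [Finset.mem_insert] at hs ht
      rcases hs with rfl | hs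
      · rcases ht with rfl | ht
        · exact absurd rfl hst
        · exact hcon t ht
      · rcases ht with rfl | ht
        · rw [dist_comm]; exact hcon s hs
        · exact hT2 s hs t ht hst
  have hmem2 : T.card + 1 ∈ S := ⟨insert ξ T, hPnew, Finset.card_insert_of_notMem hξT⟩
  have := le_csSup hbdd hmem2
  omega

lemma exists_dyadic {x : ℝ} (hx0 : 0 < x) (hx1 : x < 1) :
    ∃ n : ℕ, (1/2:ℝ) ^ (n+1) ≤ x ∧ x < (1/2:ℝ) ^ n := by
  have hPex : ∃ k : ℕ, (1/2 : ℝ) ^ (k+1) ≤ x := by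
    obtain ⟨k, hk⟩ := exists_pow_lt_of_lt_one hx0 (by norm_num : (1/2:ℝ) < 1)
    refine ⟨k, le_trans ?_ hk.le⟩
    apply pow_le_pow_of_le_one (by norm_num) (by norm_num)
    omega
  refine ⟨Nat.find hPex, Nat.find_spec hPex, ?_⟩
  rcases Nat.eq_zero_or_pos (Nat.find hPex) with h0 | h0
  · rw [h0]; simpa using hx1
  · obtain ⟨m, hm⟩ : ∃ m, Nat.find hPex = m + 1 := ⟨Nat.find hPex - 1, by omega⟩
    have hmin := Nat.find_min hPex (show m < Nat.find hPex by omega)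
    rw [hm]
    linarith [not_le.1 hmin]

lemma smsv_tail (hd : 0 < d)
    [MeasurableSpace (EuclideanSpace ℝ (Fin d) →L[ℝ] EuclideanSpace ℝ (Fin d))]
    [BorelSpace (EuclideanSpace ℝ (Fin d) →L[ℝ] EuclideanSpace ℝ (Fin d))]
    (μ : Measure (EuclideanSpace ℝ (Fin d) →L[ℝ] EuclideanSpace ℝ (Fin d)))
    [IsProbabilityMeasure μ]
    (hmom : ∀ p : ℝ, 1 ≤ p → ∫⁻ V, (‖V‖₊ : ℝ≥0∞) ^ p ∂μ < ⊤)
    (hball : ∀ p : ℝ, 1 ≤ p → ∃ C : ℝ, ∀ ε : ℝ, ε ∈ Set.Ioc (0 : ℝ) 1 →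
      ∀ ξ : EuclideanSpace ℝ (Fin d), ‖ξ‖ = 1 →
        μ {V | ‖V ξ‖ ≤ ε} ≤ ENNReal.ofReal (C * ε ^ p))
    (q : ℝ) (hq : 1 ≤ q) :
    ∃ K : ℝ≥0∞, K ≠ ⊤ ∧ ∀ ε ∈ Ioc (0:ℝ) 1,
      μ {V | smsv d V ≤ ε} ≤ K * ENNReal.ofReal (ε ^ q) := by
  have hq0 : 0 ≤ q := by linarith
  set p : ℝ := q + 2 * d with hpdef
  have hp : 1 ≤ p := by
    have : (0:ℝ) ≤ 2 * d := by positivity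
    linarith
  obtain ⟨C, hC⟩ := hball p hp
  set C' : ℝ := max C 0 with hC'def
  have hC'0 : 0 ≤ C' := le_max_right _ _
  set M : ℝ≥0∞ := ∫⁻ V, (‖V‖₊ : ℝ≥0∞) ^ q ∂μ with hMdef
  have hM : M ≠ ⊤ := (hmom q hq).ne
  refine ⟨M + ENNReal.ofReal (4 ^ d * (3:ℝ) ^ p * C') + ENNReal.ofReal ((3:ℝ) ^ q),
    by finiteness, ?_⟩
  intro ε hε
  obtain ⟨hε0, hε1⟩ := hε
  have hεq : (0:ℝ) < ε ^ q := Real.rpow_pos_of_pos hε0 q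
  -- Markov bound
  have markov : μ {V | ε⁻¹ ≤ ‖V‖} ≤ M * ENNReal.ofReal (ε ^ q) := by
    have hf : AEMeasurable (fun V : EuclideanSpace ℝ (Fin d) →L[ℝ] EuclideanSpace ℝ (Fin d) =>
        (‖V‖₊ : ℝ≥0∞) ^ q) μ :=
      ((measurable_nnnorm.comp measurable_id).coe_nnreal_ennreal.pow_const q).aemeasurable
    have hsub : {V : EuclideanSpace ℝ (Fin d) →L[ℝ] EuclideanSpace ℝ (Fin d) | ε⁻¹ ≤ ‖V‖} ⊆
        {V | ENNReal.ofReal (ε⁻¹ ^ q) ≤ (‖V‖₊ : ℝ≥0∞) ^ q} := by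
      intro V hV
      simp only [Set.mem_setOf_eq] at hV ⊢
      have hVpos : (0:ℝ) < ‖V‖ := lt_of_lt_of_le (inv_pos.2 hε0) hV
      calc ENNReal.ofReal (ε⁻¹ ^ q) ≤ ENNReal.ofReal (‖V‖ ^ q) :=
            ENNReal.ofReal_le_ofReal (Real.rpow_le_rpow (by positivity) hV hq0)
      _ = (ENNReal.ofReal ‖V‖) ^ q := (ENNReal.ofReal_rpow_of_pos hVpos).symm
      _ = (‖V‖₊ : ℝ≥0∞) ^ q := by rw [ofReal_norm, enorm_eq_nnnorm]
    have hmark := mul_meas_ge_le_lintegral₀ hf (ENNReal.ofReal (ε⁻¹ ^ q))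
    have hle : ENNReal.ofReal (ε⁻¹ ^ q) * μ {V | ε⁻¹ ≤ ‖V‖} ≤ M :=
      le_trans (mul_le_mul_right (measure_mono hsub) _) hmark
    have hcinv : ENNReal.ofReal (ε⁻¹ ^ q) = (ENNReal.ofReal (ε ^ q))⁻¹ := by
      rw [Real.inv_rpow hε0.le, ENNReal.ofReal_inv_of_pos hεq]
    have hb0 : ENNReal.ofReal (ε ^ q) ≠ 0 := by
      simp [ENNReal.ofReal_eq_zero, not_le, hεq]
    have hbt : ENNReal.ofReal (ε ^ q) ≠ ⊤ := ofReal_ne_top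
    rw [hcinv] at hle
    calc μ {V | ε⁻¹ ≤ ‖V‖}
        = ENNReal.ofReal (ε ^ q) * ((ENNReal.ofReal (ε ^ q))⁻¹ * μ {V | ε⁻¹ ≤ ‖V‖}) := by
          rw [← mul_assoc, ENNReal.mul_inv_cancel hb0 hbt, one_mul]
    _ ≤ ENNReal.ofReal (ε ^ q) * M := mul_le_mul_right hle _
    _ = M * ENNReal.ofReal (ε ^ q) := mul_comm _ _
  by_cases h3 : 3 * ε ≤ 1
  · -- small ε case: use a net at scale ε^2
    have hr : ε ^ 2 ∈ Ioc (0:ℝ) 1 := ⟨by positivity, by nlinarith⟩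
    obtain ⟨T, hT1, hTcard, hTnet⟩ := exists_net hd hr
    have hincl : {V : EuclideanSpace ℝ (Fin d) →L[ℝ] EuclideanSpace ℝ (Fin d) | smsv d V ≤ ε} ⊆
        {V | ε⁻¹ ≤ ‖V‖} ∪ ⋃ t ∈ T, {V | ‖V t‖ ≤ 3 * ε} := by
      intro V hV
      simp only [Set.mem_setOf_eq] at hV
      by_cases hVn : ε⁻¹ ≤ ‖V‖
      · exact Or.inl hVn
      · push_neg at hVn
        right
        obtain ⟨ξ, hξ1, hξ2⟩ := smsv_exists_lt hd V (lt_of_le_of_lt hV (by linarith : ε < 2 * ε))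
        obtain ⟨t, htT, htd⟩ := hTnet ξ (by simpa [mem_sphere_iff_norm] using hξ1)
        simp only [mem_iUnion, Set.mem_setOf_eq]
        refine ⟨t, htT, ?_⟩
        have hbound : ‖V t‖ ≤ ‖V ξ‖ + ‖V‖ * ‖t - ξ‖ := by
          calc ‖V t‖ = ‖V ξ + V (t - ξ)‖ := by rw [← map_add]; congr 2; abel
          _ ≤ ‖V ξ‖ + ‖V (t - ξ)‖ := norm_add_le _ _
          _ ≤ ‖V ξ‖ + ‖V‖ * ‖t - ξ‖ := by linarith [V.le_opNorm (t - ξ)]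
        have htξ : ‖t - ξ‖ ≤ ε ^ 2 := by
          rw [← dist_eq_norm, dist_comm]; exact htd
        have : ‖V‖ * ‖t - ξ‖ ≤ ε⁻¹ * ε ^ 2 := by
          apply mul_le_mul hVn.le htξ (norm_nonneg _) (by positivity)
        have hεinv : ε⁻¹ * ε ^ 2 = ε := by field_simp
        linarith
    have hsmall : ∀ t ∈ T, μ {V | ‖V t‖ ≤ 3 * ε} ≤ ENNReal.ofReal (C' * (3 * ε) ^ p) := by
      intro t ht
      have ht1 : ‖t‖ = 1 := by simpa [mem_sphere_iff_norm] using hT1 ht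
      refine le_trans (hC (3 * ε) ⟨by linarith, h3⟩ t ht1) ?_
      apply ENNReal.ofReal_le_ofReal
      apply mul_le_mul_of_nonneg_right (le_max_left _ _)
      positivity
    have harith : (4 / ε ^ 2) ^ d * (C' * (3 * ε) ^ p) = 4 ^ d * (3:ℝ) ^ p * C' * ε ^ q := by
      have h3e : (3 * ε) ^ p = 3 ^ p * ε ^ p := Real.mul_rpow (by norm_num) hε0.le
      have hεp : ε ^ p = ε ^ q * ε ^ (2 * (d:ℝ)) := by
        rw [hpdef, Real.rpow_add hε0]
      have h2d : ε ^ (2 * (d:ℝ)) = (ε ^ 2) ^ d := by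
        rw [← Real.rpow_natCast (ε ^ 2) d, ← Real.rpow_natCast ε 2, ← Real.rpow_mul hε0.le]
        norm_num [mul_comm]
      have hε2 : (0:ℝ) < (ε ^ 2) ^ d := by positivity
      rw [h3e, hεp, h2d, div_pow]
      field_simp
    calc μ {V | smsv d V ≤ ε}
        ≤ μ ({V | ε⁻¹ ≤ ‖V‖} ∪ ⋃ t ∈ T, {V | ‖V t‖ ≤ 3 * ε}) := measure_mono hincl
    _ ≤ μ {V | ε⁻¹ ≤ ‖V‖} + μ (⋃ t ∈ T, {V | ‖V t‖ ≤ 3 * ε}) := measure_union_le _ _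
    _ ≤ M * ENNReal.ofReal (ε ^ q) + ∑ t ∈ T, μ {V | ‖V t‖ ≤ 3 * ε} := by
        exact add_le_add markov (measure_biUnion_finset_le _ _)
    _ ≤ M * ENNReal.ofReal (ε ^ q) + ∑ _t ∈ T, ENNReal.ofReal (C' * (3 * ε) ^ p) := by
        exact add_le_add_right (Finset.sum_le_sum hsmall) _
    _ = M * ENNReal.ofReal (ε ^ q) + (T.card : ℝ≥0∞) * ENNReal.ofReal (C' * (3 * ε) ^ p) := by
        rw [Finset.sum_const, nsmul_eq_mul]
    _ ≤ M * ENNReal.ofReal (ε ^ q) +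
          ENNReal.ofReal ((4 / ε ^ 2) ^ d) * ENNReal.ofReal (C' * (3 * ε) ^ p) := by
        refine add_le_add_right (mul_le_mul_left ?_ _) _
        rw [← ENNReal.ofReal_natCast]
        exact ENNReal.ofReal_le_ofReal hTcard
    _ = M * ENNReal.ofReal (ε ^ q) + ENNReal.ofReal ((4 / ε ^ 2) ^ d * (C' * (3 * ε) ^ p)) := by
        rw [← ENNReal.ofReal_mul (by positivity)]
    _ = M * ENNReal.ofReal (ε ^ q) + ENNReal.ofReal (4 ^ d * (3:ℝ) ^ p * C') *
          ENNReal.ofReal (ε ^ q) := by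
        rw [harith, ENNReal.ofReal_mul (by positivity)]
    _ ≤ (M + ENNReal.ofReal (4 ^ d * (3:ℝ) ^ p * C') + ENNReal.ofReal ((3:ℝ) ^ q)) *
          ENNReal.ofReal (ε ^ q) := by
        rw [add_mul, add_mul]
        exact le_add_right le_rfl
  · -- large ε : trivial bound
    push_neg at h3
    have h1 : (1:ℝ) ≤ (3 * ε) ^ q := Real.one_le_rpow (by linarith) hq0
    have h2 : (1:ℝ≥0∞) ≤ ENNReal.ofReal ((3:ℝ) ^ q) * ENNReal.ofReal (ε ^ q) := by
      rw [← ENNReal.ofReal_mul (by positivity), ← Real.mul_rpow (by norm_num) hε0.le]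
      rw [show (1:ℝ≥0∞) = ENNReal.ofReal 1 by simp]
      exact ENNReal.ofReal_le_ofReal h1
    calc μ {V | smsv d V ≤ ε} ≤ 1 := prob_le_one
    _ ≤ ENNReal.ofReal ((3:ℝ) ^ q) * ENNReal.ofReal (ε ^ q) := h2
    _ ≤ _ := by
        apply mul_le_mul_left
        exact le_add_self

end AuxiliarySmallBall

section Main
open Metric Set

/-- Measure-theoretic form of Theorem 4.3: for a probability measure `μ` on the `d × d`
matrices (realized as continuous linear maps on Euclidean space, with the operator norm),
small-ball estimates `μ{‖Vξ‖ ≤ ε} ≤ C_p ε^p` (uniformly over unit vectors `ξ`) together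
with finiteness of all moments of `‖V‖` imply that `μ`-almost every `V` is invertible and
that all moments of `‖V⁻¹‖` are finite. -/
theorem inverse_moments_of_small_ball (d : ℕ) (hd : 0 < d)
    [MeasurableSpace (EuclideanSpace ℝ (Fin d) →L[ℝ] EuclideanSpace ℝ (Fin d))]
    [BorelSpace (EuclideanSpace ℝ (Fin d) →L[ℝ] EuclideanSpace ℝ (Fin d))]
    (μ : Measure (EuclideanSpace ℝ (Fin d) →L[ℝ] EuclideanSpace ℝ (Fin d)))
    [IsProbabilityMeasure μ]
    -- (i) all moments of `‖V‖` are finite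
    (hmom : ∀ p : ℝ, 1 ≤ p → ∫⁻ V, (‖V‖₊ : ℝ≥0∞) ^ p ∂μ < ⊤)
    -- (ii) small-ball estimates, uniform over unit vectors
    (hball : ∀ p : ℝ, 1 ≤ p → ∃ C : ℝ, ∀ ε : ℝ, ε ∈ Set.Ioc (0 : ℝ) 1 →
      ∀ ξ : EuclideanSpace ℝ (Fin d), ‖ξ‖ = 1 →
        μ {V | ‖V ξ‖ ≤ ε} ≤ ENNReal.ofReal (C * ε ^ p)) :
    (∀ᵐ V ∂μ, IsUnit V) ∧
    (∀ p : ℝ, 1 ≤ p → ∫⁻ V, (‖Ring.inverse V‖₊ : ℝ≥0∞) ^ p ∂μ < ⊤) := by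
  have htail : ∀ q : ℝ, 1 ≤ q → ∃ K : ℝ≥0∞, K ≠ ⊤ ∧ ∀ ε ∈ Ioc (0:ℝ) 1,
      μ {V | smsv d V ≤ ε} ≤ K * ENNReal.ofReal (ε ^ q) :=
    fun q hq => smsv_tail hd μ hmom hball q hq
  -- Step 1: a.e. positivity of smsv
  have hZ : μ {V | smsv d V ≤ 0} = 0 := by
    obtain ⟨K, hK, hKb⟩ := htail 1 le_rfl
    have hseq : ∀ n : ℕ, μ {V | smsv d V ≤ 0} ≤ K * ENNReal.ofReal (1 / (n + 1)) := by
      intro n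
      have hmem : (1 / ((n:ℝ) + 1)) ∈ Ioc (0:ℝ) 1 := by
        constructor
        · positivity
        · rw [div_le_one (by positivity)]; linarith [Nat.cast_nonneg (α := ℝ) n]
      have h1 := hKb _ hmem
      rw [Real.rpow_one] at h1
      refine le_trans (measure_mono ?_) h1
      intro V hV
      simp only [Set.mem_setOf_eq] at hV ⊢
      exact le_trans hV (by positivity)
    have hlim : Filter.Tendsto (fun n : ℕ => K * ENNReal.ofReal (1 / (n + 1)))
        Filter.atTop (nhds 0) := by
      have h0 : Filter.Tendsto (fun n : ℕ => (1 / ((n:ℝ) + 1))) Filter.atTop (nhds 0) :=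
        tendsto_one_div_add_atTop_nhds_zero_nat
      have h1 : Filter.Tendsto (fun n : ℕ => ENNReal.ofReal (1 / ((n:ℝ) + 1)))
          Filter.atTop (nhds 0) := by
        rw [show (0:ℝ≥0∞) = ENNReal.ofReal 0 by simp]
        exact (ENNReal.continuous_ofReal.tendsto 0).comp h0
      have := ENNReal.Tendsto.const_mul h1 (Or.inr hK)
      simpa using this
    have := ge_of_tendsto' hlim hseq
    simpa using this
  have haepos : ∀ᵐ V ∂μ, 0 < smsv d V := by
    rw [ae_iff]
    convert hZ using 2
    ext V
    simp [not_lt]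
  constructor
  · filter_upwards [haepos] with V hV using isUnit_of_smsv_pos hV
  -- Step 2: moments of the inverse
  intro p hp
  have hp0 : 0 ≤ p := by linarith
  set q : ℝ := p + 1 with hqdef
  obtain ⟨K, hK, hKb⟩ := htail q (by linarith)
  classical
  set S : ℕ → Set (EuclideanSpace ℝ (Fin d) →L[ℝ] EuclideanSpace ℝ (Fin d)) :=
    fun n => {V | smsv d V < (1/2 : ℝ) ^ n} with hSdef
  set c : ℕ → ℝ≥0∞ := fun n => (ENNReal.ofReal ((1/2 : ℝ) ^ (n+1)))⁻¹ ^ p with hcdef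
  set F : (EuclideanSpace ℝ (Fin d) →L[ℝ] EuclideanSpace ℝ (Fin d)) → ℝ≥0∞ :=
    fun V => 1 + ∑' n, (S n).indicator (fun _ => c n) V with hFdef
  have hSmeas : ∀ n, MeasurableSet (S n) := by
    intro n
    exact ((smsv_lipschitz hd).continuous.measurable) measurableSet_Iio
  have hpt : ∀ᵐ V ∂μ, (‖Ring.inverse V‖₊ : ℝ≥0∞) ^ p ≤ F V := by
    filter_upwards [haepos] with V hV
    have hinv := norm_inverse_le_smsv hV
    by_cases h1 : 1 ≤ smsv d V
    · have hg1 : (‖Ring.inverse V‖₊ : ℝ≥0∞) ≤ 1 := by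
        rw [← enorm_eq_nnnorm, ← ofReal_norm]
        calc ENNReal.ofReal ‖Ring.inverse V‖ ≤ ENNReal.ofReal 1 := by
              apply ENNReal.ofReal_le_ofReal
              refine hinv.trans ?_
              rw [inv_le_one_iff₀]; right; exact h1
        _ = 1 := by simp
      calc (‖Ring.inverse V‖₊ : ℝ≥0∞) ^ p ≤ 1 := ENNReal.rpow_le_one hg1 hp0
      _ ≤ F V := le_add_right le_rfl
    · push_neg at h1
      obtain ⟨n, hn1, hn2⟩ := exists_dyadic hV h1
      have hVS : V ∈ S n := by simp only [hSdef, Set.mem_setOf_eq]; exact hn2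
      have hgc : (‖Ring.inverse V‖₊ : ℝ≥0∞) ^ p ≤ c n := by
        apply ENNReal.rpow_le_rpow _ hp0
        rw [← enorm_eq_nnnorm, ← ofReal_norm,
          ← ENNReal.ofReal_inv_of_pos (by positivity : (0:ℝ) < (1/2:ℝ)^(n+1))]
        apply ENNReal.ofReal_le_ofReal
        refine hinv.trans ?_
        apply inv_anti₀ (by positivity) hn1
      calc (‖Ring.inverse V‖₊ : ℝ≥0∞) ^ p ≤ c n := hgc
      _ = (S n).indicator (fun _ => c n) V := by rw [Set.indicator_of_mem hVS]
      _ ≤ ∑' m, (S m).indicator (fun _ => c m) V := ENNReal.le_tsum n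
      _ ≤ F V := le_add_self
  have hFint : ∫⁻ V, F V ∂μ = 1 + ∑' n, c n * μ (S n) := by
    rw [hFdef]
    rw [lintegral_add_left measurable_const]
    congr 1
    · simp
    · rw [lintegral_tsum (fun n => ((measurable_const).indicator (hSmeas n)).aemeasurable)]
      congr 1
      ext n
      rw [lintegral_indicator_const (hSmeas n)]
  have hterm : ∀ n : ℕ, c n * μ (S n) ≤ K * ENNReal.ofReal ((2:ℝ) ^ p * (1/2) ^ n) := by
    intro n
    have hmem : ((1/2 : ℝ) ^ n) ∈ Ioc (0:ℝ) 1 := ⟨by positivity, pow_le_one₀ (by norm_num) (by norm_num)⟩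
    have hμ : μ (S n) ≤ K * ENNReal.ofReal (((1/2:ℝ) ^ n) ^ q) := by
      refine le_trans (measure_mono ?_) (hKb _ hmem)
      intro V hV
      simp only [hSdef, Set.mem_setOf_eq] at hV ⊢
      exact hV.le
    have hcn : c n = ENNReal.ofReal (((2:ℝ) ^ (n+1)) ^ p) := by
      simp only [hcdef]
      have hhalf : ((1/2 : ℝ) ^ (n+1))⁻¹ = 2 ^ (n+1) := by
        rw [one_div, inv_pow, inv_inv]
      rw [← ENNReal.ofReal_inv_of_pos (by positivity : (0:ℝ) < (1/2:ℝ)^(n+1)), hhalf,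
        ENNReal.ofReal_rpow_of_pos (by positivity)]
    have harith : ((2:ℝ) ^ (n+1)) ^ p * ((1/2:ℝ) ^ n) ^ q = (2:ℝ) ^ p * (1/2) ^ n := by
      have e1 : ((2:ℝ) ^ (n+1)) ^ p = (2:ℝ) ^ (((n:ℝ)+1) * p) := by
        rw [← Real.rpow_natCast (2:ℝ) (n+1), ← Real.rpow_mul (by norm_num)]
        push_cast
        ring_nf
      have e2 : ((1/2:ℝ) ^ n) ^ q = (2:ℝ) ^ (-(n:ℝ) * q) := by
        rw [one_div, inv_pow, ← Real.rpow_natCast (2:ℝ) n, ← Real.rpow_neg (by norm_num),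
          ← Real.rpow_mul (by norm_num)]
        try ring_nf
      have e3 : (2:ℝ) ^ p * (1/2:ℝ) ^ n = (2:ℝ) ^ (p - (n:ℝ)) := by
        rw [one_div, inv_pow, ← Real.rpow_natCast (2:ℝ) n, ← Real.rpow_neg (by norm_num),
          ← Real.rpow_add (by norm_num : (0:ℝ) < 2)]
        try ring_nf
      rw [e1, e2, e3, ← Real.rpow_add (by norm_num : (0:ℝ) < 2)]
      congr 1
      rw [hqdef]
      ring
    calc c n * μ (S n) ≤ c n * (K * ENNReal.ofReal (((1/2:ℝ) ^ n) ^ q)) :=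
          mul_le_mul_right hμ _
    _ = K * (ENNReal.ofReal (((2:ℝ) ^ (n+1)) ^ p) * ENNReal.ofReal (((1/2:ℝ) ^ n) ^ q)) := by
          rw [hcn]; ring
    _ = K * ENNReal.ofReal ((2:ℝ) ^ p * (1/2) ^ n) := by
          rw [← ENNReal.ofReal_mul (by positivity), harith]
  have hsum : ∑' n, c n * μ (S n) ≤ K * ENNReal.ofReal ((2:ℝ) ^ p) *
      (1 - ENNReal.ofReal (1/2))⁻¹ := by
    calc ∑' n, c n * μ (S n) ≤ ∑' n : ℕ, K * ENNReal.ofReal ((2:ℝ) ^ p * (1/2) ^ n) :=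
          ENNReal.tsum_le_tsum hterm
    _ = K * ENNReal.ofReal ((2:ℝ) ^ p) * ∑' n : ℕ, (ENNReal.ofReal (1/2)) ^ n := by
          rw [← ENNReal.tsum_mul_left]
          congr 1
          ext n
          rw [ENNReal.ofReal_mul (by positivity), ← ENNReal.ofReal_pow (by norm_num)]
          ring
    _ = K * ENNReal.ofReal ((2:ℝ) ^ p) * (1 - ENNReal.ofReal (1/2))⁻¹ := by
          rw [ENNReal.tsum_geometric]
  have hgeo : (1 - ENNReal.ofReal (1/2 : ℝ))⁻¹ ≠ ⊤ := by
    rw [Ne, ENNReal.inv_eq_top, tsub_eq_zero_iff_le]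
    intro h
    have := ENNReal.one_le_ofReal.1 h
    norm_num at this
  calc ∫⁻ V, (‖Ring.inverse V‖₊ : ℝ≥0∞) ^ p ∂μ ≤ ∫⁻ V, F V ∂μ := lintegral_mono_ae hpt
  _ = 1 + ∑' n, c n * μ (S n) := hFint
  _ ≤ 1 + K * ENNReal.ofReal ((2:ℝ) ^ p) * (1 - ENNReal.ofReal (1/2))⁻¹ := by
        exact add_le_add_right hsum _
  _ < ⊤ := by
        apply ENNReal.add_lt_top.2
        refine ⟨by simp, ?_⟩
        exact ENNReal.mul_lt_top (ENNReal.mul_lt_top hK.lt_top ENNReal.ofReal_lt_top) hgeo.lt_top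

end Main
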